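/- Let A be a commutative ring, F its total ring of fractions, Z ⊊ A a prime ideal containing all zerodivisors of A. Suppose P ∈ F^{n×m} is strictly causal (every entry of P has the form n/d with n ∈ Z, d ∈ A∖Z) and stabilizable. Then every stabilizing controller C of P is causal (every entry of C has the form n/d with n ∈ A, d ∈ A∖Z). -/

import Mathlib

open Matrix

/-- The feedback matrix `H(P,C)`. -/
noncomputable def Hmat {F : Type*} [CommRing F] {n m : ℕ}
    (P : Matrix (Fin n) (Fin m) F) (C : Matrix (Fin m) (Fin n) F) :
    Matrix (Fin n ⊕ Fin m) (Fin n ⊕ Fin m) F :=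
  Matrix.fromBlocks (1 + P * C)⁻¹ (-(P * (1 + C * P)⁻¹))
    (C * (1 + P * C)⁻¹) (1 + C * P)⁻¹

/-- `C` stabilizes `P`: `det(E + PC)` is a unit of `F` and all entries of `H(P,C)`
come from `A`. -/
noncomputable def Stabilizes {A : Type*} [CommRing A] {n m : ℕ}
    (P : Matrix (Fin n) (Fin m) (FractionRing A))
    (C : Matrix (Fin m) (Fin n) (FractionRing A)) : Prop :=
  IsUnit (1 + P * C).det ∧
    ∀ i j, Hmat P C i j ∈ Set.range (algebraMap A (FractionRing A))

/-- every stabilizing controller of a stabilizable strictly causal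
plant is causal. -/
theorem stmt_16 {A : Type*} [CommRing A] {n m : ℕ}
    (Z : Ideal A) [Z.IsPrime]
    (hZ : ∀ a : A, a ∉ nonZeroDivisors A → a ∈ Z)
    (P : Matrix (Fin n) (Fin m) (FractionRing A))
    (hstrict : ∀ i j, ∃ na d : A, na ∈ Z ∧ d ∉ Z ∧
      P i j * algebraMap A (FractionRing A) d = algebraMap A (FractionRing A) na)
    (hstab : ∃ C : Matrix (Fin m) (Fin n) (FractionRing A), Stabilizes P C) :
    ∀ C : Matrix (Fin m) (Fin n) (FractionRing A), Stabilizes P C →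
      ∀ i j, ∃ na d : A, d ∉ Z ∧
        C i j * algebraMap A (FractionRing A) d = algebraMap A (FractionRing A) na := by
  classical
  intro C hC i₀ j₀
  obtain ⟨hdet, hH⟩ := hC
  -- every element of the complement of Z maps to a unit of F
  have hcompl : ∀ y : Z.primeCompl, IsUnit (algebraMap A (FractionRing A) (y : A)) := by
    intro y
    refine IsLocalization.map_units (M := nonZeroDivisors A) (FractionRing A) ⟨(y : A), ?_⟩
    by_contra h
    exact y.2 (hZ _ h)
  -- the map from the localization at Z into F
  let φ : Localization.AtPrime Z →+* FractionRing A := IsLocalization.lift hcompl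
  have hφalg : ∀ a : A, φ (algebraMap A (Localization.AtPrime Z) a) =
      algebraMap A (FractionRing A) a := fun a => IsLocalization.lift_eq hcompl a
  -- the block H21 of the feedback matrix
  set H21 : Matrix (Fin m) (Fin n) (FractionRing A) := C * (1 + P * C)⁻¹ with hH21def
  have hH21 : ∀ a b, H21 a b ∈ Set.range (algebraMap A (FractionRing A)) := by
    intro a b
    have := hH (Sum.inr a) (Sum.inl b)
    simpa [Hmat, Matrix.fromBlocks] using this
  -- lift H21 to the localization
  let H21' : Matrix (Fin m) (Fin n) (Localization.AtPrime Z) := fun a b =>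
    algebraMap A (Localization.AtPrime Z) (Classical.choose (hH21 a b))
  have hφH21 : ∀ a b, φ (H21' a b) = H21 a b := by
    intro a b
    rw [hφalg]
    exact Classical.choose_spec (hH21 a b)
  -- lift P to the localization, with entries in the maximal ideal
  have hP : ∀ (k : Fin n) (l : Fin m), ∃ x : Localization.AtPrime Z,
      φ x = P k l ∧ x ∈ IsLocalRing.maximalIdeal (Localization.AtPrime Z) := by
    intro k l
    obtain ⟨na, d, hna, hd, heq⟩ := hstrict k l
    refine ⟨IsLocalization.mk' (Localization.AtPrime Z) na (⟨d, hd⟩ : Z.primeCompl), ?_, ?_⟩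
    · have hspec := (IsLocalization.lift_mk'_spec
        (g := algebraMap A (FractionRing A)) hcompl na
        (φ (IsLocalization.mk' (Localization.AtPrime Z) na (⟨d, hd⟩ : Z.primeCompl)))
        (⟨d, hd⟩ : Z.primeCompl)).mp rfl
      have hu := hcompl (⟨d, hd⟩ : Z.primeCompl)
      refine (hu.mul_right_cancel ?_).symm
      show P k l * _ = _
      rw [heq, hspec]
      ring
    · rw [IsLocalRing.mem_maximalIdeal, mem_nonunits_iff,
        IsLocalization.AtPrime.isUnit_mk'_iff (Localization.AtPrime Z) Z]
      simpa [Ideal.primeCompl] using hna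
  let P' : Matrix (Fin n) (Fin m) (Localization.AtPrime Z) := fun k l =>
    Classical.choose (hP k l)
  have hφP : ∀ k l, φ (P' k l) = P k l := fun k l => (Classical.choose_spec (hP k l)).1
  have hPmem : ∀ k l, P' k l ∈ IsLocalRing.maximalIdeal (Localization.AtPrime Z) :=
    fun k l => (Classical.choose_spec (hP k l)).2
  -- the matrix M' = 1 - H21' * P' over the localization
  set M' : Matrix (Fin m) (Fin m) (Localization.AtPrime Z) := 1 - H21' * P' with hM'def
  have hmem : ∀ a b, (H21' * P') a b ∈ IsLocalRing.maximalIdeal (Localization.AtPrime Z) := by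
    intro a b
    rw [Matrix.mul_apply]
    exact Ideal.sum_mem _ fun k _ => Ideal.mul_mem_left _ _ (hPmem k b)
  -- det M' is a unit
  have hMdet : IsUnit M'.det := by
    rw [← IsLocalRing.residue_ne_zero_iff_isUnit]
    have hmap : (IsLocalRing.residue (Localization.AtPrime Z)).mapMatrix M' = 1 := by
      ext a b
      simp only [RingHom.mapMatrix_apply, Matrix.map_apply, hM'def, Matrix.sub_apply]
      rw [map_sub]
      have h0 : IsLocalRing.residue (Localization.AtPrime Z) ((H21' * P') a b) = 0 :=
        (IsLocalRing.residue_eq_zero_iff _).mpr (hmem a b)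
      rw [h0, sub_zero]
      by_cases h : a = b <;> simp [Matrix.one_apply, h]
    rw [RingHom.map_det, hmap, Matrix.det_one]
    exact one_ne_zero
  -- the identity (1 - H21 * P) * C = H21 over F
  have hinv2 : (1 + P * C)⁻¹ * (1 + P * C) = 1 := Matrix.nonsing_inv_mul _ hdet
  have hkey : (1 - H21 * P) * C = H21 := by
    have h1 : H21 * (1 + P * C) = C := by
      rw [hH21def, Matrix.mul_assoc, hinv2, Matrix.mul_one]
    have h2 : H21 * P * C = C - H21 := by
      have : H21 + H21 * P * C = C := by
        calc H21 + H21 * P * C = H21 * (1 + P * C) := by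
              rw [Matrix.mul_add, Matrix.mul_one, Matrix.mul_assoc]
          _ = C := h1
      linear_combination (norm := abel) this
    rw [Matrix.sub_mul, Matrix.one_mul, h2, sub_sub_cancel]
  -- push forward
  have hφM : M'.map φ = 1 - H21 * P := by
    ext a b
    simp only [Matrix.map_apply, hM'def, Matrix.sub_apply]
    rw [map_sub]
    congr 1
    · by_cases h : a = b <;> simp [Matrix.one_apply, h]
    · rw [Matrix.mul_apply, Matrix.mul_apply, map_sum]
      exact Finset.sum_congr rfl fun k _ => by rw [_root_.map_mul, hφH21, hφP]
  have hφH21' : H21'.map φ = H21 := by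
    ext a b; exact hφH21 a b
  have hMinv : M'⁻¹ * M' = 1 := Matrix.nonsing_inv_mul _ hMdet
  have hCeq : C = (M'⁻¹ * H21').map φ := by
    calc C = 1 * C := (Matrix.one_mul C).symm
      _ = ((M'⁻¹ * M').map φ) * C := by
          rw [hMinv]
          congr 1
          ext a b
          by_cases h : a = b <;> simp [Matrix.one_apply, h]
      _ = (M'⁻¹.map φ) * ((M'.map φ) * C) := by
          rw [Matrix.map_mul, Matrix.mul_assoc]
      _ = (M'⁻¹.map φ) * H21 := by rw [hφM, hkey]
      _ = (M'⁻¹ * H21').map φ := by rw [Matrix.map_mul, hφH21']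
  -- conclude
  obtain ⟨⟨na, d⟩, hmk⟩ := IsLocalization.mk'_surjective Z.primeCompl ((M'⁻¹ * H21') i₀ j₀)
  refine ⟨na, d, d.2, ?_⟩
  have hCij : C i₀ j₀ = φ ((M'⁻¹ * H21') i₀ j₀) := by
    conv_lhs => rw [hCeq]
    rfl
  have hspec := (IsLocalization.lift_mk'_spec
      (g := algebraMap A (FractionRing A)) hcompl na
      (φ (IsLocalization.mk' (Localization.AtPrime Z) na d)) d).mp rfl
  rw [hCij, ← hmk, hspec]
  ring
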